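/- (Point to Circumgyrocenter Gyrodistance.) Let A1, A2, A3 ∈ 𝔹 be pairwise distinct and not collinear in ℝⁿ, with circumgyrocenter O = (m1·γ_{A1}·A1 + m2·γ_{A2}·A2 + m3·γ_{A3}·A3)/(m1·γ_{A1} + m2·γ_{A2} + m3·γ_{A3}) ∈ 𝔹, where m1 = (γ12 + γ13 − γ23 − 1)(γ23 − 1), m2 = (γ12 − γ13 + γ23 − 1)(γ13 − 1), m3 = (−γ12 + γ13 + γ23 − 1)(γ12 − 1) and the denominator is nonzero; let R = ‖⊖A1 ⊕ O‖ and γ_R = 1/√(1 − R²/s²). Let w1, w2, w3 ∈ ℝ with M := w1 + w2 + w3 ≠ 0 and W := w1·γ_{A1} + w2·γ_{A2} + w3·γ_{A3} ≠ 0, and suppose A := (w1·γ_{A1}·A1 + w2·γ_{A2}·A2 + w3·γ_{A3}·A3)/W lies in 𝔹. Set K = w1w2(γ12 − 1) + w1w3(γ13 − 1) + w2w3(γ23 − 1). Then the gyrodistance d = ‖⊖A ⊕ O‖ satisfies d² = R²·(1 − 2s²K/(M²·γ_R²·R²)). -/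

import Mathlib

open RealInnerProductSpace

/-- Lorentz gamma factor of a vector `v` in the `s`-ball of `ℝⁿ`. -/
noncomputable def egamma {n : ℕ} (s : ℝ) (v : EuclideanSpace ℝ (Fin n)) : ℝ :=
  1 / Real.sqrt (1 - ‖v‖ ^ 2 / s ^ 2)

/-- Einstein addition on the `s`-ball of `ℝⁿ`. -/
noncomputable def eadd {n : ℕ} (s : ℝ) (u v : EuclideanSpace ℝ (Fin n)) :
    EuclideanSpace ℝ (Fin n) :=
  (1 / (1 + ⟪u, v⟫ / s ^ 2)) •
    (u + (1 / egamma s u) • v + (egamma s u / (s ^ 2 * (1 + egamma s u))) • ⟪u, v⟫ • u)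

/-- Gyroangle at vertex `X` between points `Y` and `Z`. -/
noncomputable def gyroangle {n : ℕ} (s : ℝ) (X Y Z : EuclideanSpace ℝ (Fin n)) : ℝ :=
  Real.arccos ⟪‖eadd s (-X) Y‖⁻¹ • eadd s (-X) Y, ‖eadd s (-X) Z‖⁻¹ • eadd s (-X) Z⟫

/-- Gamma factor of a real gyrodistance `d`. -/
noncomputable def gammaR (s d : ℝ) : ℝ := 1 / Real.sqrt (1 - d ^ 2 / s ^ 2)

variable {n : ℕ} {s : ℝ} {u v : EuclideanSpace ℝ (Fin n)}

lemma egamma_neg : egamma s (-u) = egamma s u := by simp [egamma]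

lemma one_sub_pos (hs : 0 < s) (hu : ‖u‖ < s) : 0 < 1 - ‖u‖ ^ 2 / s ^ 2 := by
  have h : ‖u‖ ^ 2 < s ^ 2 := by nlinarith [norm_nonneg u]
  have : s ^ 2 > 0 := by positivity
  rw [sub_pos, div_lt_one this]; exact h

lemma egamma_pos (hs : 0 < s) (hu : ‖u‖ < s) : 0 < egamma s u := by
  have := one_sub_pos hs hu
  rw [egamma]; positivity

lemma egamma_sq (hs : 0 < s) (hu : ‖u‖ < s) :
    egamma s u ^ 2 * (1 - ‖u‖ ^ 2 / s ^ 2) = 1 := by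
  have h := one_sub_pos hs hu
  rw [egamma, div_pow, one_pow, Real.sq_sqrt h.le, one_div, inv_mul_cancel₀ h.ne']

lemma eadd_decomp :
    eadd s u v = ((1 / (1 + ⟪u, v⟫ / s ^ 2)) * (1 + (egamma s u / (s ^ 2 * (1 + egamma s u))) * ⟪u, v⟫)) • u
      + ((1 / (1 + ⟪u, v⟫ / s ^ 2)) * (1 / egamma s u)) • v := by
  rw [eadd]; module

lemma norm_eadd_sq :
    ‖eadd s u v‖ ^ 2 = (1 / (1 + ⟪u, v⟫ / s ^ 2)) ^ 2 *
      ((1 + (egamma s u / (s ^ 2 * (1 + egamma s u))) * ⟪u, v⟫) ^ 2 * ‖u‖ ^ 2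
        + 2 * ((1 + (egamma s u / (s ^ 2 * (1 + egamma s u))) * ⟪u, v⟫) * (1 / egamma s u)) * ⟪u, v⟫
        + (1 / egamma s u) ^ 2 * ‖v‖ ^ 2) := by
  rw [eadd_decomp, norm_add_sq_real, norm_smul, norm_smul,
    real_inner_smul_left, real_inner_smul_right]
  simp only [Real.norm_eq_abs, mul_pow, sq_abs]
  ring

lemma norm_sq_eq (hs : 0 < s) (hu : ‖u‖ < s) :
    ‖u‖ ^ 2 = s ^ 2 - s ^ 2 / (egamma s u) ^ 2 := by
  have h := egamma_sq (u := u) hs hu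
  have hg := egamma_pos (u := u) hs hu
  have hs2 : (s:ℝ) ^ 2 ≠ 0 := by positivity
  field_simp at h ⊢
  nlinarith [h]

lemma P_pos (hs : 0 < s) (hu : ‖u‖ < s) (hv : ‖v‖ < s) :
    0 < 1 + ⟪u, v⟫ / s ^ 2 := by
  have h := abs_real_inner_le_norm u v
  have h2 : ‖u‖ * ‖v‖ < s ^ 2 := by nlinarith [norm_nonneg u, norm_nonneg v]
  have : -(s ^ 2) < ⟪u, v⟫ := by
    have := neg_abs_le (⟪u, v⟫ : ℝ); nlinarith
  have hs2 : (0:ℝ) < s ^ 2 := by positivity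
  have ht : -1 < ⟪u, v⟫ / s ^ 2 := by
    rw [lt_div_iff₀ hs2]; nlinarith
  linarith

lemma key_identity (hs : 0 < s) (hu : ‖u‖ < s) (hv : ‖v‖ < s) :
    (1 + ⟪u, v⟫ / s ^ 2) ^ 2 * (1 - ‖eadd s u v‖ ^ 2 / s ^ 2)
      = (1 - ‖u‖ ^ 2 / s ^ 2) * (1 - ‖v‖ ^ 2 / s ^ 2) := by
  have hg := egamma_pos (u := u) hs hu
  have ha := norm_sq_eq (u := u) hs hu
  have hP := P_pos hs hu hv
  have hsne : s ≠ 0 := hs.ne'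
  have hgne : egamma s u ≠ 0 := (egamma_pos (u := u) hs hu).ne'
  have hg1 : 1 + egamma s u ≠ 0 := by positivity
  have hPne : 1 + ⟪u, v⟫ / s ^ 2 ≠ 0 := hP.ne'
  rw [norm_eadd_sq]
  generalize hgg : egamma s u = g at *
  generalize htt : (⟪u, v⟫ : ℝ) = t at *
  generalize hbb : ‖v‖ = b at *
  have step : ∀ Q : ℝ, (1 + t / s ^ 2) ^ 2 * (1 - (1 / (1 + t / s ^ 2)) ^ 2 * Q / s ^ 2)
      = (1 + t / s ^ 2) ^ 2 - Q / s ^ 2 := by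
    intro Q
    have e : (1 + t / s ^ 2) * s ^ 2 = s ^ 2 + t := by field_simp
    have h2 : (0:ℝ) < s ^ 2 + t := e ▸ mul_pos hP (pow_pos hs 2)
    have h1 : (1 + t / s ^ 2) * (1 / (1 + t / s ^ 2)) = 1 := by
      field_simp [h2.ne']
    calc (1 + t / s ^ 2) ^ 2 * (1 - (1 / (1 + t / s ^ 2)) ^ 2 * Q / s ^ 2)
        = (1 + t / s ^ 2) ^ 2 - ((1 + t / s ^ 2) * (1 / (1 + t / s ^ 2))) ^ 2 * Q / s ^ 2 := by
          ring
      _ = (1 + t / s ^ 2) ^ 2 - Q / s ^ 2 := by rw [h1]; ring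
  rw [step, ha]
  field_simp
  ring

lemma norm_eadd_lt (hs : 0 < s) (hu : ‖u‖ < s) (hv : ‖v‖ < s) :
    ‖eadd s u v‖ < s := by
  have hk := key_identity hs hu hv
  have hP := P_pos hs hu hv
  have h1 := one_sub_pos hs hu
  have h2 := one_sub_pos hs hv
  have hx : 0 < 1 - ‖eadd s u v‖ ^ 2 / s ^ 2 := by nlinarith
  have hs2 : (0:ℝ) < s ^ 2 := by positivity
  have : ‖eadd s u v‖ ^ 2 < s ^ 2 := by
    rw [sub_pos, div_lt_one hs2] at hx; exact hx
  nlinarith [norm_nonneg (eadd s u v)]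

lemma egamma_eadd (hs : 0 < s) (hu : ‖u‖ < s) (hv : ‖v‖ < s) :
    egamma s (eadd s u v) = egamma s u * egamma s v * (1 + ⟪u, v⟫ / s ^ 2) := by
  have hlt := norm_eadd_lt hs hu hv
  have h1 := egamma_sq hs hlt
  have h2 := egamma_sq hs hu
  have h3 := egamma_sq hs hv
  have hk := key_identity hs hu hv
  have hP := P_pos hs hu hv
  have hE := egamma_pos hs hlt
  have hgu := egamma_pos hs hu
  have hgv := egamma_pos hs hv
  have hx := one_sub_pos hs hlt
  have hrhs : (egamma s u * egamma s v * (1 + ⟪u, v⟫ / s ^ 2)) ^ 2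
      * (1 - ‖eadd s u v‖ ^ 2 / s ^ 2) = 1 := by
    linear_combination (egamma s u ^ 2 * egamma s v ^ 2) * hk
      + (egamma s v ^ 2 * (1 - ‖v‖ ^ 2 / s ^ 2)) * h2 + h3
  have hsq : egamma s (eadd s u v) ^ 2
      = (egamma s u * egamma s v * (1 + ⟪u, v⟫ / s ^ 2)) ^ 2 := by
    have hz : (egamma s (eadd s u v) ^ 2
        - (egamma s u * egamma s v * (1 + ⟪u, v⟫ / s ^ 2)) ^ 2)
        * (1 - ‖eadd s u v‖ ^ 2 / s ^ 2) = 0 := by linear_combination h1 - hrhs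
    rcases mul_eq_zero.1 hz with h | h
    · linarith [sub_eq_zero.1 (by linarith : egamma s (eadd s u v) ^ 2
        - (egamma s u * egamma s v * (1 + ⟪u, v⟫ / s ^ 2)) ^ 2 = 0)]
    · exact absurd h hx.ne'
  have hpos2 : 0 < egamma s u * egamma s v * (1 + ⟪u, v⟫ / s ^ 2) := by positivity
  calc egamma s (eadd s u v) = Real.sqrt (egamma s (eadd s u v) ^ 2) :=
        (Real.sqrt_sq hE.le).symm
    _ = Real.sqrt ((egamma s u * egamma s v * (1 + ⟪u, v⟫ / s ^ 2)) ^ 2) := by rw [hsq]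
    _ = _ := Real.sqrt_sq hpos2.le

lemma egamma_eadd_neg (hs : 0 < s) (hu : ‖u‖ < s) (hv : ‖v‖ < s) :
    egamma s (eadd s (-u) v) = egamma s u * egamma s v * (1 - ⟪u, v⟫ / s ^ 2) := by
  have h := egamma_eadd (u := -u) (v := v) hs (by simpa using hu) hv
  rw [h, egamma_neg, inner_neg_left]
  ring

lemma norm_eadd_neg_lt (hs : 0 < s) (hu : ‖u‖ < s) (hv : ‖v‖ < s) :
    ‖eadd s (-u) v‖ < s := norm_eadd_lt hs (by simpa using hu) hv

lemma eq_zero_of_egamma_eq_one (hs : 0 < s) (hu : ‖u‖ < s) (h : egamma s u = 1) :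
    u = 0 := by
  have h2 := egamma_sq hs hu
  rw [h] at h2
  field_simp at h2
  exact norm_eq_zero.1 (pow_eq_zero_iff two_ne_zero |>.1 (by linarith))

lemma eq_of_eadd_neg_eq_zero (hs : 0 < s) (hu : ‖u‖ < s) (hv : ‖v‖ < s)
    (h : eadd s (-u) v = 0) : u = v := by
  have hk := key_identity (u := -u) (v := v) hs (by simpa using hu) hv
  rw [h] at hk
  simp only [norm_zero, inner_neg_left] at hk
  have hs2 : (0:ℝ) < s ^ 2 := by positivity
  set a := ‖u‖ with ha
  set b := ‖v‖ with hb
  set t : ℝ := ⟪u, v⟫ with htdef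
  have han : 0 ≤ a := norm_nonneg u
  have hbn : 0 ≤ b := norm_nonneg v
  have htab : t ≤ a * b := real_inner_le_norm u v
  have hab : a * b < s ^ 2 := by nlinarith
  have habpos : 0 < s ^ 2 - a * b := by linarith
  have hk2 : (s ^ 2 - t) ^ 2 = (s ^ 2 - a ^ 2) * (s ^ 2 - b ^ 2) := by
    field_simp at hk
    rw [norm_neg, ← ha] at hk
    have h4 : (s:ℝ) ^ 4 ≠ 0 := by positivity
    apply mul_right_cancel₀ h4
    linear_combination s ^ 2 * hk
  have hge : (s ^ 2 - a * b) ^ 2 ≤ (s ^ 2 - t) ^ 2 := by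
    have hle : s ^ 2 - a * b ≤ s ^ 2 - t := by linarith
    exact pow_le_pow_left₀ habpos.le hle 2
  have hab0 : (a - b) ^ 2 ≤ 0 := by nlinarith [hge, hk2, hs2]
  have haeqb : a = b := by
    have h0 : (a - b) ^ 2 = 0 := le_antisymm hab0 (sq_nonneg _)
    have := pow_eq_zero_iff (n := 2) (by norm_num) |>.1 h0
    linarith [sub_eq_zero.1 this]
  have htba : t = a * b := by
    have h1 : (s ^ 2 - t) ^ 2 = (s ^ 2 - a * b) ^ 2 := by
      rw [hk2]; linear_combination (-(s ^ 2) * (a - b)) * haeqb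
    have h2 : s ^ 2 - t = s ^ 2 - a * b := by
      have e1 : s ^ 2 - t = Real.sqrt ((s ^ 2 - t) ^ 2) :=
        (Real.sqrt_sq (by nlinarith)).symm
      rw [e1, h1, Real.sqrt_sq habpos.le]
    linarith
  have hcs : (⟪u, v⟫ : ℝ) = ‖u‖ * ‖v‖ := htba
  have hsm := inner_eq_norm_mul_iff_real.1 hcs
  rw [← ha, ← hb, ← haeqb] at hsm
  rcases eq_or_lt_of_le han with h0 | h0
  · have hu0 : u = 0 := norm_eq_zero.1 (by rw [← ha, ← h0])
    have hv0 : v = 0 := norm_eq_zero.1 (by rw [← hb, ← haeqb, ← h0])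
    rw [hu0, hv0]
  · exact smul_right_injective _ h0.ne' hsm


set_option maxHeartbeats 1000000 in
/-- **Point to Circumgyrocenter Gyrodistance Theorem.** -/
theorem point_to_circumgyrocenter_gyrodistance {n : ℕ} (hn : 2 ≤ n) (s : ℝ) (hs : 0 < s)
    (A1 A2 A3 O A : EuclideanSpace ℝ (Fin n))
    (hA1 : ‖A1‖ < s) (hA2 : ‖A2‖ < s) (hA3 : ‖A3‖ < s)
    (h12 : A1 ≠ A2) (h13 : A1 ≠ A3) (h23 : A2 ≠ A3)
    (hncol : ¬ Collinear ℝ ({A1, A2, A3} : Set (EuclideanSpace ℝ (Fin n))))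
    (γ12 γ13 γ23 m1 m2 m3 D R : ℝ)
    (hγ12 : γ12 = egamma s (eadd s (-A1) A2))
    (hγ13 : γ13 = egamma s (eadd s (-A1) A3))
    (hγ23 : γ23 = egamma s (eadd s (-A2) A3))
    (hm1 : m1 = (γ12 + γ13 - γ23 - 1) * (γ23 - 1))
    (hm2 : m2 = (γ12 - γ13 + γ23 - 1) * (γ13 - 1))
    (hm3 : m3 = (-γ12 + γ13 + γ23 - 1) * (γ12 - 1))
    (hD : D = m1 * egamma s A1 + m2 * egamma s A2 + m3 * egamma s A3)
    (hDne : D ≠ 0)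
    (hO : O = D⁻¹ • ((m1 * egamma s A1) • A1 + (m2 * egamma s A2) • A2 +
      (m3 * egamma s A3) • A3))
    (hOball : ‖O‖ < s)
    (hR : R = ‖eadd s (-A1) O‖)
    (w1 w2 w3 M W K : ℝ)
    (hM : M = w1 + w2 + w3) (hMne : M ≠ 0)
    (hW : W = w1 * egamma s A1 + w2 * egamma s A2 + w3 * egamma s A3)
    (hWne : W ≠ 0)
    (hA : A = W⁻¹ • ((w1 * egamma s A1) • A1 + (w2 * egamma s A2) • A2 +
      (w3 * egamma s A3) • A3))
    (hAball : ‖A‖ < s)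
    (hK : K = w1 * w2 * (γ12 - 1) + w1 * w3 * (γ13 - 1) + w2 * w3 * (γ23 - 1)) :
    ‖eadd s (-A) O‖ ^ 2 =
      R ^ 2 * (1 - 2 * s ^ 2 * K / (M ^ 2 * (gammaR s R) ^ 2 * R ^ 2)) := by
  have hsne : s ≠ 0 := hs.ne'
  have hg1p := egamma_pos (u := A1) hs hA1
  have hg2p := egamma_pos (u := A2) hs hA2
  have hg3p := egamma_pos (u := A3) hs hA3
  have hgOp := egamma_pos (u := O) hs hOball
  have hgAp := egamma_pos (u := A) hs hAball
  have hg1ne := hg1p.ne'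
  have hg2ne := hg2p.ne'
  have hg3ne := hg3p.ne'
  have hgOne := hgOp.ne'
  have hgAne := hgAp.ne'
  -- gamma factor products for the sides
  have e12 : γ12 * s ^ 2 = egamma s A1 * egamma s A2 * (s ^ 2 - ⟪A1, A2⟫) := by
    rw [hγ12, egamma_eadd_neg hs hA1 hA2]; field_simp
  have e13 : γ13 * s ^ 2 = egamma s A1 * egamma s A3 * (s ^ 2 - ⟪A1, A3⟫) := by
    rw [hγ13, egamma_eadd_neg hs hA1 hA3]; field_simp
  have e23 : γ23 * s ^ 2 = egamma s A2 * egamma s A3 * (s ^ 2 - ⟪A2, A3⟫) := by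
    rw [hγ23, egamma_eadd_neg hs hA2 hA3]; field_simp
  -- inner products in terms of gammas
  have hT11 : (⟪A1, A1⟫ : ℝ) = s ^ 2 - s ^ 2 / (egamma s A1) ^ 2 := by
    rw [real_inner_self_eq_norm_sq]; exact norm_sq_eq hs hA1
  have hT22 : (⟪A2, A2⟫ : ℝ) = s ^ 2 - s ^ 2 / (egamma s A2) ^ 2 := by
    rw [real_inner_self_eq_norm_sq]; exact norm_sq_eq hs hA2
  have hT33 : (⟪A3, A3⟫ : ℝ) = s ^ 2 - s ^ 2 / (egamma s A3) ^ 2 := by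
    rw [real_inner_self_eq_norm_sq]; exact norm_sq_eq hs hA3
  have hT12 : (⟪A1, A2⟫ : ℝ) = s ^ 2 - s ^ 2 * γ12 / (egamma s A1 * egamma s A2) := by
    have h : s ^ 2 * γ12 / (egamma s A1 * egamma s A2) = s ^ 2 - ⟪A1, A2⟫ := by
      rw [div_eq_iff (by positivity)]; linear_combination e12
    rw [h]; ring
  have hT13 : (⟪A1, A3⟫ : ℝ) = s ^ 2 - s ^ 2 * γ13 / (egamma s A1 * egamma s A3) := by
    have h : s ^ 2 * γ13 / (egamma s A1 * egamma s A3) = s ^ 2 - ⟪A1, A3⟫ := by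
      rw [div_eq_iff (by positivity)]; linear_combination e13
    rw [h]; ring
  have hT23 : (⟪A2, A3⟫ : ℝ) = s ^ 2 - s ^ 2 * γ23 / (egamma s A2 * egamma s A3) := by
    have h : s ^ 2 * γ23 / (egamma s A2 * egamma s A3) = s ^ 2 - ⟪A2, A3⟫ := by
      rw [div_eq_iff (by positivity)]; linear_combination e23
    rw [h]; ring
  have hS21 : (⟪A2, A1⟫ : ℝ) = ⟪A1, A2⟫ := real_inner_comm _ _
  have hS31 : (⟪A3, A1⟫ : ℝ) = ⟪A1, A3⟫ := real_inner_comm _ _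
  have hS32 : (⟪A3, A2⟫ : ℝ) = ⟪A2, A3⟫ := real_inner_comm _ _
  -- inner products with O
  have hIO1 : (⟪A1, O⟫ : ℝ) = D⁻¹ * ((m1 * egamma s A1) * ⟪A1, A1⟫
      + (m2 * egamma s A2) * ⟪A1, A2⟫ + (m3 * egamma s A3) * ⟪A1, A3⟫) := by
    rw [hO]; simp only [inner_add_right, real_inner_smul_right]
  have hIO2 : (⟪A2, O⟫ : ℝ) = D⁻¹ * ((m1 * egamma s A1) * ⟪A1, A2⟫
      + (m2 * egamma s A2) * ⟪A2, A2⟫ + (m3 * egamma s A3) * ⟪A2, A3⟫) := by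
    rw [hO]; simp only [inner_add_right, real_inner_smul_right, hS21]
  have hIO3 : (⟪A3, O⟫ : ℝ) = D⁻¹ * ((m1 * egamma s A1) * ⟪A1, A3⟫
      + (m2 * egamma s A2) * ⟪A2, A3⟫ + (m3 * egamma s A3) * ⟪A3, A3⟫) := by
    rw [hO]; simp only [inner_add_right, real_inner_smul_right, hS31, hS32]
  -- the three vertex gammas to O
  have hc1 : egamma s (eadd s (-A1) O)
      = egamma s A1 * egamma s O * (1 - ⟪A1, O⟫ / s ^ 2) :=
    egamma_eadd_neg hs hA1 hOball
  have hc2 : egamma s (eadd s (-A2) O)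
      = egamma s A2 * egamma s O * (1 - ⟪A2, O⟫ / s ^ 2) :=
    egamma_eadd_neg hs hA2 hOball
  have hc3 : egamma s (eadd s (-A3) O)
      = egamma s A3 * egamma s O * (1 - ⟪A3, O⟫ / s ^ 2) :=
    egamma_eadd_neg hs hA3 hOball
  have hDne' : m1 * egamma s A1 + m2 * egamma s A2 + m3 * egamma s A3 ≠ 0 := by
    rw [← hD]; exact hDne
  have E1 : D * egamma s (eadd s (-A1) O)
      = egamma s O * (m1 + m2 * γ12 + m3 * γ13) := by
    rw [hc1, hIO1, hT11, hT12, hT13, hD]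
    field_simp
    ring
  have E2 : D * egamma s (eadd s (-A2) O)
      = egamma s O * (m1 * γ12 + m2 + m3 * γ23) := by
    rw [hc2, hIO2, hT22, hT12, hT23, hD]
    field_simp
    ring
  have E3 : D * egamma s (eadd s (-A3) O)
      = egamma s O * (m1 * γ13 + m2 * γ23 + m3) := by
    rw [hc3, hIO3, hT33, hT13, hT23, hD]
    field_simp
    ring
  -- circumcenter property: the three gammas agree
  have hsum12 : m1 + m2 * γ12 + m3 * γ13 = m1 * γ12 + m2 + m3 * γ23 := by
    rw [hm1, hm2, hm3]; ring
  have hsum13 : m1 + m2 * γ12 + m3 * γ13 = m1 * γ13 + m2 * γ23 + m3 := by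
    rw [hm1, hm2, hm3]; ring
  have hceq12 : egamma s (eadd s (-A1) O) = egamma s (eadd s (-A2) O) := by
    apply mul_left_cancel₀ hDne
    rw [E1, E2, hsum12]
  have hceq13 : egamma s (eadd s (-A1) O) = egamma s (eadd s (-A3) O) := by
    apply mul_left_cancel₀ hDne
    rw [E1, E3, hsum13]
  set c1 : ℝ := egamma s (eadd s (-A1) O) with hc1def
  have hc1p : 0 < c1 := egamma_pos hs (norm_eadd_neg_lt hs hA1 hOball)
  have hc1ne : c1 ≠ 0 := hc1p.ne'
  -- gammaR s R = c1
  have hγR : gammaR s R = c1 := by rw [hR]; rfl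
  have hR2 : R ^ 2 = s ^ 2 - s ^ 2 / c1 ^ 2 := by
    rw [hR]; exact norm_sq_eq hs (norm_eadd_neg_lt hs hA1 hOball)
  -- R ≠ 0
  have hRne : R ≠ 0 := by
    intro hR0
    have hz : eadd s (-A1) O = 0 := by
      rw [← norm_eq_zero, ← hR, hR0]
    have hOA1 : A1 = O := eq_of_eadd_neg_eq_zero hs hA1 hOball hz
    have hone : c1 = 1 := by
      rw [hc1def, hz]; simp [egamma]
    have h2z : eadd s (-A2) O = 0 :=
      eq_zero_of_egamma_eq_one hs (norm_eadd_neg_lt hs hA2 hOball)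
        (by rw [← hceq12, hone])
    have hOA2 : A2 = O := eq_of_eadd_neg_eq_zero hs hA2 hOball h2z
    exact h12 (hOA1.trans hOA2.symm)
  -- inner products of the vertices with O in closed form
  have hc1' : c1 * s ^ 2 = egamma s A1 * egamma s O * (s ^ 2 - ⟪A1, O⟫) := by
    rw [hc1]; field_simp
  have hc2' : c1 * s ^ 2 = egamma s A2 * egamma s O * (s ^ 2 - ⟪A2, O⟫) := by
    rw [hceq12, hc2]; field_simp
  have hc3' : c1 * s ^ 2 = egamma s A3 * egamma s O * (s ^ 2 - ⟪A3, O⟫) := by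
    rw [hceq13, hc3]; field_simp
  have hJ1 : (⟪A1, O⟫ : ℝ) = s ^ 2 - s ^ 2 * c1 / (egamma s A1 * egamma s O) := by
    have h : s ^ 2 * c1 / (egamma s A1 * egamma s O) = s ^ 2 - ⟪A1, O⟫ := by
      rw [div_eq_iff (by positivity)]; linear_combination hc1'
    rw [h]; ring
  have hJ2 : (⟪A2, O⟫ : ℝ) = s ^ 2 - s ^ 2 * c1 / (egamma s A2 * egamma s O) := by
    have h : s ^ 2 * c1 / (egamma s A2 * egamma s O) = s ^ 2 - ⟪A2, O⟫ := by
      rw [div_eq_iff (by positivity)]; linear_combination hc2'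
    rw [h]; ring
  have hJ3 : (⟪A3, O⟫ : ℝ) = s ^ 2 - s ^ 2 * c1 / (egamma s A3 * egamma s O) := by
    have h : s ^ 2 * c1 / (egamma s A3 * egamma s O) = s ^ 2 - ⟪A3, O⟫ := by
      rw [div_eq_iff (by positivity)]; linear_combination hc3'
    rw [h]; ring
  -- expansions with A
  have hWne' : w1 * egamma s A1 + w2 * egamma s A2 + w3 * egamma s A3 ≠ 0 := by
    rw [← hW]; exact hWne
  have hIAO : (⟪A, O⟫ : ℝ) = W⁻¹ * ((w1 * egamma s A1) * ⟪A1, O⟫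
      + (w2 * egamma s A2) * ⟪A2, O⟫ + (w3 * egamma s A3) * ⟪A3, O⟫) := by
    rw [hA]; simp only [inner_add_left, real_inner_smul_left]
  have hIA1 : (⟪A1, A⟫ : ℝ) = W⁻¹ * ((w1 * egamma s A1) * ⟪A1, A1⟫
      + (w2 * egamma s A2) * ⟪A1, A2⟫ + (w3 * egamma s A3) * ⟪A1, A3⟫) := by
    rw [hA]; simp only [inner_add_right, real_inner_smul_right]
  have hIA2 : (⟪A2, A⟫ : ℝ) = W⁻¹ * ((w1 * egamma s A1) * ⟪A1, A2⟫
      + (w2 * egamma s A2) * ⟪A2, A2⟫ + (w3 * egamma s A3) * ⟪A2, A3⟫) := by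
    rw [hA]; simp only [inner_add_right, real_inner_smul_right, hS21]
  have hIA3 : (⟪A3, A⟫ : ℝ) = W⁻¹ * ((w1 * egamma s A1) * ⟪A1, A3⟫
      + (w2 * egamma s A2) * ⟪A2, A3⟫ + (w3 * egamma s A3) * ⟪A3, A3⟫) := by
    rw [hA]; simp only [inner_add_right, real_inner_smul_right, hS31, hS32]
  have hIAA : (⟪A, A⟫ : ℝ) = W⁻¹ * ((w1 * egamma s A1) * ⟪A1, A⟫
      + (w2 * egamma s A2) * ⟪A2, A⟫ + (w3 * egamma s A3) * ⟪A3, A⟫) := by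
    conv_lhs => rw [hA]
    simp only [inner_add_left, real_inner_smul_left]
    rw [← hA]
  -- gamma of A to O
  set γd : ℝ := egamma s (eadd s (-A) O) with hγddef
  have hγd : γd = egamma s A * egamma s O * (1 - ⟪A, O⟫ / s ^ 2) :=
    egamma_eadd_neg hs hAball hOball
  have hγdp : 0 < γd := egamma_pos hs (norm_eadd_neg_lt hs hAball hOball)
  have Ed : W * γd = egamma s A * M * c1 := by
    rw [hγd, hIAO, hJ1, hJ2, hJ3, hW, hM]
    field_simp
    ring
  -- the gyrobarycentric constant
  have hgAsq : (egamma s A) ^ 2 * (1 - ⟪A, A⟫ / s ^ 2) = 1 := by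
    rw [real_inner_self_eq_norm_sq]; exact egamma_sq hs hAball
  have hWX : (w1 * egamma s A1 + w2 * egamma s A2 + w3 * egamma s A3) ^ 2
      * (1 - ⟪A, A⟫ / s ^ 2)
      = (w1 + w2 + w3) ^ 2 + 2 * (w1 * w2 * (γ12 - 1) + w1 * w3 * (γ13 - 1)
        + w2 * w3 * (γ23 - 1)) := by
    rw [hIAA, hIA1, hIA2, hIA3, hT11, hT22, hT33, hT12, hT13, hT23, hW]
    field_simp
    ring
  have hKey : W ^ 2 = (egamma s A) ^ 2 * (M ^ 2 + 2 * K) := by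
    rw [hW, hM, hK]
    linear_combination (egamma s A) ^ 2 * hWX
      - (w1 * egamma s A1 + w2 * egamma s A2 + w3 * egamma s A3) ^ 2 * hgAsq
  have hMKne : M ^ 2 + 2 * K ≠ 0 := by
    intro h
    rw [h, mul_zero] at hKey
    exact hWne (pow_eq_zero_iff (n := 2) (by norm_num) |>.1 hKey)
  -- squared relation for γd
  have h1 : (M ^ 2 + 2 * K) * γd ^ 2 = M ^ 2 * c1 ^ 2 := by
    have h2 : W ^ 2 * γd ^ 2 = (egamma s A) ^ 2 * (M ^ 2 * c1 ^ 2) := by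
      linear_combination (W * γd + egamma s A * M * c1) * Ed
    rw [hKey] at h2
    apply mul_left_cancel₀ (pow_ne_zero 2 hgAne)
    linear_combination h2
  have hgd : γd ^ 2 = M ^ 2 * c1 ^ 2 / (M ^ 2 + 2 * K) := by
    field_simp
    linear_combination h1
  -- finish
  have hd2 : ‖eadd s (-A) O‖ ^ 2 = s ^ 2 - s ^ 2 / γd ^ 2 :=
    norm_sq_eq hs (norm_eadd_neg_lt hs hAball hOball)
  rw [hd2, hγR]
  have hB : R ^ 2 * (1 - 2 * s ^ 2 * K / (M ^ 2 * c1 ^ 2 * R ^ 2))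
      = R ^ 2 - 2 * s ^ 2 * K / (M ^ 2 * c1 ^ 2) := by
    field_simp
  rw [hB, hgd, hR2]
  field_simp
  ring
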